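/- For all integers n ≥ d ≥ 0, there exists a d-degenerate finite simple graph G with n vertices that contains a clique of cardinality d and has exactly 2^d·(n − d + 1) cliques. -/

import Mathlib

/-- The number of cliques (sets of pairwise adjacent vertices, including the
empty clique) of a graph. -/
noncomputable def cliqueCount {V : Type*} (G : SimpleGraph V) : ℕ :=
  Nat.card {s : Finset V // G.IsClique (s : Set V)}

/-- A graph is `d`-degenerate if every nonempty set of vertices contains a
vertex with at most `d` neighbours in that set. -/
def IsDegenerate {V : Type*} (G : SimpleGraph V) (d : ℕ) : Prop :=
  ∀ S : Finset V, S.Nonempty → ∃ v ∈ S, Nat.card {u ∈ (S : Set V) | G.Adj v u} ≤ d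

def BookGraph (n d : ℕ) : SimpleGraph (Fin n) where
  Adj u v := u ≠ v ∧ ((u : ℕ) < d ∨ (v : ℕ) < d)
  symm := ⟨fun _ _ ⟨h1, h2⟩ => ⟨h1.symm, h2.symm⟩⟩
  loopless := ⟨fun _ h => h.1 rfl⟩

variable {n d : ℕ}

def equivLow (hdn : d ≤ n) : {v : Fin n // (v : ℕ) < d} ≃ Fin d where
  toFun x := ⟨x.1, x.2⟩
  invFun i := ⟨⟨i, lt_of_lt_of_le i.2 hdn⟩, i.2⟩
  left_inv x := by ext; rfl
  right_inv i := by ext; rfl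

def equivHigh : {v : Fin n // d ≤ (v : ℕ)} ≃ Fin (n - d) where
  toFun x := ⟨x.1 - d, by have := x.1.isLt; omega⟩
  invFun i := ⟨⟨i + d, by have := i.2; omega⟩, by simp⟩
  left_inv x := by ext; have := x.2; simp; omega
  right_inv i := by ext; simp

def lowEmb : {v : Fin n // (v : ℕ) < d} ↪ Fin n := Function.Embedding.subtype _

def bookF (n d : ℕ) (p : Finset {v : Fin n // (v : ℕ) < d} × Option {v : Fin n // d ≤ (v : ℕ)}) :
    {s : Finset (Fin n) // (BookGraph n d).IsClique (s : Set (Fin n))} := by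
  refine ⟨p.1.map lowEmb ∪ (p.2.map Subtype.val).toFinset, ?_⟩
  intro u hu v hv huv
  refine ⟨huv, ?_⟩
  by_contra h
  push_neg at h
  obtain ⟨hu', hv'⟩ := h
  simp only [Finset.coe_union, Set.mem_union, Finset.coe_map, lowEmb,
    Set.mem_image, Finset.mem_coe, Option.mem_toFinset, Option.mem_map] at hu hv
  rcases hu with ⟨x, _, rfl⟩ | ⟨x, hx, rfl⟩
  · simp only [lowEmb, Function.Embedding.coe_subtype] at hu'
    have := x.2; omega
  rcases hv with ⟨y, _, rfl⟩ | ⟨y, hy, rfl⟩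
  · simp only [lowEmb, Function.Embedding.coe_subtype] at hv'
    have := y.2; omega
  · exact huv (congrArg Subtype.val (Option.mem_unique hx hy))

lemma bookF_bij (hdn : d ≤ n) : Function.Bijective (bookF n d) := by
  constructor
  · rintro ⟨A, o⟩ ⟨A', o'⟩ h
    have h' : A.map lowEmb ∪ (o.map Subtype.val).toFinset
        = A'.map lowEmb ∪ (o'.map Subtype.val).toFinset := congrArg Subtype.val h
    have hlow : ∀ (B : Finset {v : Fin n // (v : ℕ) < d})
        (q : Option {v : Fin n // d ≤ (v : ℕ)}),
        (B.map lowEmb ∪ (q.map Subtype.val).toFinset).filter (fun v : Fin n => (v : ℕ) < d)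
          = B.map lowEmb := by
      intro B q
      ext v
      simp only [Finset.mem_filter, Finset.mem_union, Finset.mem_map, lowEmb,
        Function.Embedding.coe_subtype, Option.mem_toFinset, Option.mem_map]
      constructor
      · rintro ⟨h1 | ⟨x, hx, rfl⟩, h2⟩
        · exact h1
        · exact absurd x.2 (by omega)
      · rintro ⟨x, hx, rfl⟩
        exact ⟨Or.inl ⟨x, hx, rfl⟩, x.2⟩
    have hhigh : ∀ (B : Finset {v : Fin n // (v : ℕ) < d})
        (q : Option {v : Fin n // d ≤ (v : ℕ)}),
        (B.map lowEmb ∪ (q.map Subtype.val).toFinset).filter (fun v : Fin n => d ≤ (v : ℕ))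
          = (q.map Subtype.val).toFinset := by
      intro B q
      ext v
      simp only [Finset.mem_filter, Finset.mem_union, Finset.mem_map, lowEmb,
        Function.Embedding.coe_subtype, Option.mem_toFinset, Option.mem_map]
      constructor
      · rintro ⟨⟨x, hx, rfl⟩ | h1, h2⟩
        · exact absurd x.2 (by omega)
        · exact h1
      · rintro ⟨x, hx, rfl⟩
        exact ⟨Or.inr ⟨x, hx, rfl⟩, x.2⟩
    have e1 : A.map lowEmb = A'.map lowEmb := by
      rw [← hlow A o, ← hlow A' o', h']
    have e2 : (o.map Subtype.val).toFinset = (o'.map Subtype.val).toFinset := by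
      rw [← hhigh A o, ← hhigh A' o', h']
    have eA : A = A' := Finset.map_injective _ e1
    have eo : o = o' := by
      cases o with
      | none => cases o' with
        | none => rfl
        | some y =>
          simp only [Option.map_none, Option.toFinset_none, Option.map_some,
            Option.toFinset_some] at e2
          exact absurd e2.symm (Finset.singleton_ne_empty _)
      | some x => cases o' with
        | none =>
          simp only [Option.map_none, Option.toFinset_none, Option.map_some,
            Option.toFinset_some] at e2
          exact absurd e2 (Finset.singleton_ne_empty _)
        | some y =>
          simp only [Option.map_some, Option.toFinset_some,
            Finset.singleton_inj] at e2
          rw [Subtype.ext e2]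
    rw [eA, eo]
  · rintro ⟨s, hs⟩
    have hcard : (s.filter (fun v : Fin n => d ≤ (v : ℕ))).card ≤ 1 := by
      rw [Finset.card_le_one]
      intro a ha b hb
      simp only [Finset.mem_filter] at ha hb
      by_contra hab
      have := hs (Finset.mem_coe.2 ha.1) (Finset.mem_coe.2 hb.1) hab
      rcases this.2 with h | h
      · omega
      · omega
    set A : Finset {v : Fin n // (v : ℕ) < d} := s.subtype (fun v : Fin n => (v : ℕ) < d) with hA
    have hAmap : A.map lowEmb = s.filter (fun v : Fin n => (v : ℕ) < d) := by
      simp [hA, lowEmb, Finset.subtype_map]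
    have hsplit : s.filter (fun v : Fin n => (v : ℕ) < d)
        ∪ s.filter (fun v : Fin n => d ≤ (v : ℕ)) = s := by
      ext v
      simp only [Finset.mem_union, Finset.mem_filter]
      constructor
      · rintro (⟨h, _⟩ | ⟨h, _⟩) <;> exact h
      · intro h
        rcases lt_or_ge (v : ℕ) d with h' | h'
        exacts [Or.inl ⟨h, h'⟩, Or.inr ⟨h, h'⟩]
    rcases Finset.eq_empty_or_nonempty (s.filter (fun v : Fin n => d ≤ (v : ℕ))) with he | hne
    · refine ⟨⟨A, none⟩, ?_⟩
      apply Subtype.ext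
      show A.map lowEmb ∪ _ = s
      simp only [Option.map_none, Option.toFinset_none, Finset.union_empty]
      rw [hAmap, Finset.filter_eq_self]
      intro v hv
      by_contra hvd
      have : v ∈ s.filter (fun v : Fin n => d ≤ (v : ℕ)) :=
        Finset.mem_filter.2 ⟨hv, le_of_not_gt hvd⟩
      rw [he] at this
      exact absurd this (Finset.notMem_empty v)
    · obtain ⟨x, hx⟩ := hne
      have hx' := Finset.mem_filter.1 hx
      have hsing : s.filter (fun v : Fin n => d ≤ (v : ℕ)) = {x} :=
        Finset.eq_singleton_iff_unique_mem.2 ⟨hx, fun y hy => by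
          rw [Finset.card_le_one] at hcard; exact hcard y hy x hx⟩
      refine ⟨⟨A, some ⟨x, hx'.2⟩⟩, ?_⟩
      apply Subtype.ext
      show A.map lowEmb ∪ _ = s
      simp only [Option.map_some, Option.toFinset_some]
      rw [hAmap, ← hsing, hsplit]

/-- For all `n ≥ d ≥ 0` there is a `d`-degenerate graph with `n` vertices
containing a `d`-clique and having exactly `2^d·(n - d + 1)` cliques. -/
theorem clique_count_degenerate_exists (n d : ℕ) (hdn : d ≤ n) :
    ∃ G : SimpleGraph (Fin n), IsDegenerate G d ∧
      (∃ s : Finset (Fin n), G.IsNClique d s) ∧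
      cliqueCount G = 2 ^ d * (n - d + 1) := by
  refine ⟨BookGraph n d, ?_, ?_, ?_⟩
  · -- degeneracy
    intro S hS
    have hlowcard : Set.ncard {u : Fin n | (u : ℕ) < d} = d := by
      have h1 : Nat.card {v : Fin n // (v : ℕ) < d} = d := by
        rw [Nat.card_eq_of_bijective _ (equivLow hdn).bijective]; simp
      rw [← Nat.card_coe_set_eq]
      exact h1
    by_cases hh : ∃ v ∈ S, d ≤ (v : ℕ)
    · obtain ⟨v, hv, hvd⟩ := hh
      refine ⟨v, hv, ?_⟩
      have hsub : {u ∈ (S : Set (Fin n)) | (BookGraph n d).Adj v u}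
          ⊆ {u : Fin n | (u : ℕ) < d} := by
        rintro u ⟨_, hadj⟩
        rcases hadj.2 with h | h
        · exact absurd hvd (by omega)
        · exact h
      calc Nat.card {u ∈ (S : Set (Fin n)) | (BookGraph n d).Adj v u}
          = Set.ncard {u ∈ (S : Set (Fin n)) | (BookGraph n d).Adj v u} :=
            Nat.card_coe_set_eq _
        _ ≤ Set.ncard {u : Fin n | (u : ℕ) < d} :=
            Set.ncard_le_ncard hsub (Set.toFinite _)
        _ = d := hlowcard
    · push_neg at hh
      obtain ⟨v, hv⟩ := hS
      refine ⟨v, hv, ?_⟩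
      have hsub : {u ∈ (S : Set (Fin n)) | (BookGraph n d).Adj v u}
          ⊆ {u : Fin n | (u : ℕ) < d} := by
        rintro u ⟨hu, _⟩
        exact hh u hu
      calc Nat.card {u ∈ (S : Set (Fin n)) | (BookGraph n d).Adj v u}
          = Set.ncard {u ∈ (S : Set (Fin n)) | (BookGraph n d).Adj v u} :=
            Nat.card_coe_set_eq _
        _ ≤ Set.ncard {u : Fin n | (u : ℕ) < d} :=
            Set.ncard_le_ncard hsub (Set.toFinite _)
        _ = d := hlowcard
  · -- d-clique
    refine ⟨(Finset.univ : Finset (Fin d)).map (Fin.castLEEmb hdn), ?_, ?_⟩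
    · intro u hu v hv huv
      simp only [Finset.coe_map, Set.mem_image, Finset.coe_univ, Set.image_univ,
        Set.mem_range] at hu hv
      obtain ⟨x, rfl⟩ := hu
      obtain ⟨y, rfl⟩ := hv
      exact ⟨huv, Or.inl (by simp [Fin.castLEEmb])⟩
    · simp
  · -- count
    unfold cliqueCount
    rw [← Nat.card_eq_of_bijective _ (bookF_bij hdn)]
    rw [Nat.card_prod]
    rw [Nat.card_eq_fintype_card, Nat.card_eq_fintype_card, Fintype.card_finset,
      Fintype.card_option]
    rw [Fintype.card_congr (equivLow hdn), Fintype.card_congr equivHigh]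
    simp
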